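/- Let I, J ⊆ ℝ be open intervals with −3 ∉ I and −3 ∉ J, let Π : I → ℝ be twice differentiable, let Y₁, Y₂ : J → ℝ be differentiable, and let κ₁ ∈ ℝ. Suppose 𝒬 : I → ℝ is differentiable and satisfies 𝒬′(t) = (𝒬(t) − κ₁)/(t+3) + ((2t+3)·Π′(t) − 2·Π(t))/(3·(t+3)) for all t ∈ I, and 𝒫 : J → ℝ is differentiable with 𝒫′(s) = −κ₁ − s²·Y₁′(s) − 2s·Y₂′(s) + (s+3)/16 for all s ∈ J. Define Γ(t,s) = −(1/3)·(2s+3)·Π(t) + 𝒫(s) + (s+3)·(𝒬(t) − (1/16)·(t+3)·log|s+3|) + s·t·Y₁(s) + (s+t)·Y₂(s). Then for all (t,s) ∈ I × J: (i) ∂Γ/∂s − ∂Γ/∂t + (s−t)·∂²Γ/∂s∂t = 0, and (ii) ∂²Γ/∂t² = (t−s)·Π″(t)/(t+3). -/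

import Mathlib

set_option maxHeartbeats 1600000 in
/-- Let `I, J ⊆ ℝ` be open intervals with `−3 ∉ I`, `−3 ∉ J`, let
`Π : I → ℝ` (here `Pfun`) be twice differentiable, `Y₁, Y₂ : J → ℝ` differentiable,
`κ₁ ∈ ℝ`.  Suppose `Q : I → ℝ` is differentiable with
`Q′(t) = (Q(t) − κ₁)/(t+3) + ((2t+3)Π′(t) − 2Π(t))/(3(t+3))` on `I`, and `Pc : J → ℝ`
is differentiable with `Pc′(s) = −κ₁ − s²Y₁′(s) − 2sY₂′(s) + (s+3)/16` on `J`.  Define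
`Γ(t,s) = −(1/3)(2s+3)Π(t) + Pc(s) + (s+3)(Q(t) − (1/16)(t+3)log|s+3|)
          + s·t·Y₁(s) + (s+t)Y₂(s)`.
Then for all `(t,s) ∈ I × J`:
(i)  `∂Γ/∂s − ∂Γ/∂t + (s−t)∂²Γ/∂s∂t = 0`  (the orthotoric constraint), and
(ii) `∂²Γ/∂t² = (t−s)Π″(t)/(t+3)`. -/
theorem stmt_17 (I J : Set ℝ)
    (hI : ∃ a b : ℝ, I = Set.Ioo a b) (hJ : ∃ a b : ℝ, J = Set.Ioo a b)
    (hI3 : (-3 : ℝ) ∉ I) (hJ3 : (-3 : ℝ) ∉ J)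
    (Pfun Y₁ Y₂ Q Pc : ℝ → ℝ) (κ₁ : ℝ)
    (hP₁ : ∀ t ∈ I, DifferentiableAt ℝ Pfun t)
    (hP₂ : ∀ t ∈ I, DifferentiableAt ℝ (deriv Pfun) t)
    (hY₁ : ∀ s ∈ J, DifferentiableAt ℝ Y₁ s)
    (hY₂ : ∀ s ∈ J, DifferentiableAt ℝ Y₂ s)
    (hQ : ∀ t ∈ I, DifferentiableAt ℝ Q t)
    (hQ' : ∀ t ∈ I, deriv Q t = (Q t - κ₁) / (t + 3)
        + ((2 * t + 3) * deriv Pfun t - 2 * Pfun t) / (3 * (t + 3)))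
    (hPc : ∀ s ∈ J, DifferentiableAt ℝ Pc s)
    (hPc' : ∀ s ∈ J, deriv Pc s =
        -κ₁ - s ^ 2 * deriv Y₁ s - 2 * s * deriv Y₂ s + (s + 3) / 16)
    (Γ : ℝ → ℝ → ℝ)
    (hΓ : ∀ t s : ℝ, Γ t s =
      -(1 / 3) * (2 * s + 3) * Pfun t + Pc s
        + (s + 3) * (Q t - (1 / 16) * (t + 3) * Real.log (s + 3))
        + s * t * Y₁ s + (s + t) * Y₂ s) :
    ∀ t ∈ I, ∀ s ∈ J,
      (deriv (fun s' => Γ t s') s - deriv (fun t' => Γ t' s) t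
          + (s - t) * deriv (fun s' => deriv (fun t' => Γ t' s') t) s = 0) ∧
      deriv (fun t' => deriv (fun t'' => Γ t'' s) t') t =
        (t - s) * deriv (deriv Pfun) t / (t + 3) := by
  obtain ⟨a, b, rfl⟩ := hI
  obtain ⟨c, d, rfl⟩ := hJ
  intro t ht s hs
  have ht3 : t + 3 ≠ 0 := by
    intro h
    exact hI3 (by have : t = -3 := by linarith
                  rwa [this] at ht)
  have hs3 : s + 3 ≠ 0 := by
    intro h
    exact hJ3 (by have : s = -3 := by linarith
                  rwa [this] at hs)
  have hid : ∀ x : ℝ, HasDerivAt (fun y : ℝ => y) 1 x := fun x => hasDerivAt_id x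
  have hlog : HasDerivAt (fun x : ℝ => Real.log (x + 3)) (s + 3)⁻¹ s := by
    simpa using ((hid s).add_const 3).log hs3
  -- the t-partial derivative of Γ, for every τ ∈ I and every σ
  have hgt : ∀ τ ∈ Set.Ioo a b, ∀ σ : ℝ, HasDerivAt (fun t' => Γ t' σ)
      (-(1 / 3) * (2 * σ + 3) * deriv Pfun τ
        + (σ + 3) * (deriv Q τ - 1 / 16 * Real.log (σ + 3))
        + σ * Y₁ σ + Y₂ σ) τ := by
    intro τ hτ σ
    have h : HasDerivAt (fun t' : ℝ =>
        (-(1 / 3) * (2 * σ + 3)) * Pfun t' + ((σ + 3)) * Q t'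
          + (-(1 / 16) * (σ + 3) * Real.log (σ + 3) + σ * Y₁ σ + Y₂ σ) * t'
          + (Pc σ - 3 / 16 * (σ + 3) * Real.log (σ + 3) + σ * Y₂ σ)) _ τ :=
      ((((hP₁ τ hτ).hasDerivAt.const_mul _).add
        ((hQ τ hτ).hasDerivAt.const_mul _)).add
        ((hid τ).const_mul _)).add_const _
    have h2 : HasDerivAt (fun t' : ℝ =>
        (-(1 / 3) * (2 * σ + 3)) * Pfun t' + ((σ + 3)) * Q t'
          + (-(1 / 16) * (σ + 3) * Real.log (σ + 3) + σ * Y₁ σ + Y₂ σ) * t'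
          + (Pc σ - 3 / 16 * (σ + 3) * Real.log (σ + 3) + σ * Y₂ σ))
        (-(1 / 3) * (2 * σ + 3) * deriv Pfun τ
          + (σ + 3) * (deriv Q τ - 1 / 16 * Real.log (σ + 3))
          + σ * Y₁ σ + Y₂ σ) τ := by
      convert h using 1
      ring
    exact h2.congr_of_eventuallyEq
      (Filter.Eventually.of_forall fun y => by simp only [hΓ]; try ring)
  -- the s-partial derivative of Γ at (t,s)
  have hgs : HasDerivAt (fun s' => Γ t s')
      (-(2 / 3) * Pfun t + deriv Pc s + Q t
        - 1 / 16 * (t + 3) * Real.log (s + 3) - 1 / 16 * (t + 3)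
        + t * Y₁ s + s * t * deriv Y₁ s + Y₂ s + (s + t) * deriv Y₂ s) s := by
    have h : HasDerivAt (fun s' : ℝ =>
        ((-(1 / 3)) * (2 * s' + 3)) * Pfun t + Pc s'
          + (s' + 3) * (Q t - (1 / 16 * (t + 3)) * Real.log (s' + 3))
          + (s' * t) * Y₁ s' + (s' + t) * Y₂ s') _ s :=
      ((((((((hid s).const_mul 2).add_const 3).const_mul
            (-(1 / 3))).mul_const (Pfun t)).add
          (hPc s hs).hasDerivAt).add
        (((hid s).add_const 3).mul
          (HasDerivAt.const_sub (Q t) (hlog.const_mul (1 / 16 * (t + 3)))))).add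
        (((hid s).mul_const t).mul (hY₁ s hs).hasDerivAt)).add
        (((hid s).add_const t).mul (hY₂ s hs).hasDerivAt)
    have h2 : HasDerivAt (fun s' : ℝ =>
        ((-(1 / 3)) * (2 * s' + 3)) * Pfun t + Pc s'
          + (s' + 3) * (Q t - (1 / 16 * (t + 3)) * Real.log (s' + 3))
          + (s' * t) * Y₁ s' + (s' + t) * Y₂ s')
        (-(2 / 3) * Pfun t + deriv Pc s + Q t
          - 1 / 16 * (t + 3) * Real.log (s + 3) - 1 / 16 * (t + 3)
          + t * Y₁ s + s * t * deriv Y₁ s + Y₂ s + (s + t) * deriv Y₂ s) s := by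
      convert h using 1
      field_simp
      ring
    exact h2.congr_of_eventuallyEq
      (Filter.Eventually.of_forall fun y => by simp only [hΓ]; try ring)
  -- the mixed partial ∂/∂s (∂Γ/∂t) at (t,s)
  have hmixfun : (fun s' => deriv (fun t' => Γ t' s') t) = fun s' =>
      -(1 / 3) * (2 * s' + 3) * deriv Pfun t
        + (s' + 3) * (deriv Q t - 1 / 16 * Real.log (s' + 3))
        + s' * Y₁ s' + Y₂ s' :=
    funext fun s' => (hgt t ht s').deriv
  have hmix : HasDerivAt (fun s' : ℝ =>
      -(1 / 3) * (2 * s' + 3) * deriv Pfun t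
        + (s' + 3) * (deriv Q t - 1 / 16 * Real.log (s' + 3))
        + s' * Y₁ s' + Y₂ s')
      (-(2 / 3) * deriv Pfun t + deriv Q t - 1 / 16 * Real.log (s + 3) - 1 / 16
        + Y₁ s + s * deriv Y₁ s + deriv Y₂ s) s := by
    have h : HasDerivAt (fun s' : ℝ =>
        -(1 / 3) * (2 * s' + 3) * deriv Pfun t
          + (s' + 3) * (deriv Q t - 1 / 16 * Real.log (s' + 3))
          + s' * Y₁ s' + Y₂ s') _ s :=
      ((((((hid s).const_mul 2).add_const 3).const_mul
            (-(1 / 3))).mul_const (deriv Pfun t)).add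
          ((((hid s)).add_const 3).mul
            (HasDerivAt.const_sub (deriv Q t) (hlog.const_mul (1 / 16))))).add
          ((hid s).mul (hY₁ s hs).hasDerivAt) |>.add (hY₂ s hs).hasDerivAt
    convert h using 1
    field_simp
    ring
  -- differentiability of deriv Q at t
  have hQmem : Set.Ioo a b ∈ nhds t := isOpen_Ioo.mem_nhds ht
  have hF : HasDerivAt (fun τ : ℝ => (Q τ - κ₁) / (τ + 3)
      + ((2 * τ + 3) * deriv Pfun τ - 2 * Pfun τ) / (3 * (τ + 3))) _ t :=
    (((hQ t ht).hasDerivAt.sub_const κ₁).div ((hid t).add_const 3) ht3).add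
      ((((((hid t).const_mul 2).add_const 3).mul (hP₂ t ht).hasDerivAt).sub
          ((hP₁ t ht).hasDerivAt.const_mul 2)).div
        (((hid t).add_const 3).const_mul 3)
        (by simpa using mul_ne_zero (three_ne_zero) ht3))
  have hQd : HasDerivAt (deriv Q) _ t :=
    hF.congr_of_eventuallyEq
      (Filter.eventuallyEq_of_mem hQmem fun τ hτ => hQ' τ hτ)
  -- second t-derivative
  have htt : HasDerivAt (fun t' : ℝ =>
      -(1 / 3) * (2 * s + 3) * deriv Pfun t'
        + (s + 3) * (deriv Q t' - 1 / 16 * Real.log (s + 3))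
        + s * Y₁ s + Y₂ s) _ t :=
    ((((hP₂ t ht).hasDerivAt.const_mul (-(1 / 3) * (2 * s + 3))).add
      ((hQd.sub_const (1 / 16 * Real.log (s + 3))).const_mul (s + 3))).add_const
      (s * Y₁ s)).add_const (Y₂ s)
  have httfun : deriv (fun t'' => Γ t'' s) =ᶠ[nhds t] fun t' =>
      -(1 / 3) * (2 * s + 3) * deriv Pfun t'
        + (s + 3) * (deriv Q t' - 1 / 16 * Real.log (s + 3))
        + s * Y₁ s + Y₂ s :=
    Filter.eventuallyEq_of_mem hQmem fun τ hτ => (hgt τ hτ s).deriv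
  constructor
  · rw [hgs.deriv, (hgt t ht s).deriv, hmixfun, hmix.deriv, hPc' s hs, hQ' t ht]
    field_simp
    ring
  · rw [httfun.deriv_eq, htt.deriv, hQ' t ht]
    simp only [Pi.sub_apply, Pi.mul_apply]
    field_simp
    ring
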